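/- Let d ≥ 2 and suppose x₁^{d-1}·x₂ = λ₁·x₁^d + ∑_{i=3}^{m} λᵢ·(aᵢᵀx)^d in K[x₁,…,xₙ], where each aᵢ ∈ Kⁿ and λᵢ ∈ K. Then m − 2 ≥ d, i.e., at least d powers of linear forms besides x₁^d are needed to express x₁^{d-1}·x₂. -/

import Mathlib

open MvPolynomial Finset
-- test coeff lemma
lemma coeff_lin_pow {K : Type*} [CommRing K] (α β : K) (d j : ℕ) :
    ((Polynomial.C α * Polynomial.X + Polynomial.C β) ^ d).coeff j =
      α ^ j * β ^ (d - j) * (d.choose j : K) := by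
  rw [add_pow, Polynomial.finset_sum_coeff]
  have hterm : ∀ k ∈ range (d+1),
      ((Polynomial.C α * Polynomial.X)^k * Polynomial.C β^(d-k) * (d.choose k : Polynomial K)).coeff j
        = if k = j then α^j*β^(d-j)*(d.choose j:K) else 0 := by
    intro k _
    have h1 : ((d.choose k : ℕ) : Polynomial K) = Polynomial.C ((d.choose k : ℕ) : K) := by simp
    rw [h1, mul_pow, ← Polynomial.C_pow, ← Polynomial.C_pow]
    rw [show Polynomial.C (α^k) * Polynomial.X ^ k * Polynomial.C (β^(d-k)) * Polynomial.C ((d.choose k : ℕ) : K)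
        = Polynomial.C (α^k * β^(d-k) * (d.choose k : K)) * Polynomial.X ^ k by
      simp [Polynomial.C_mul]; ring]
    rw [Polynomial.coeff_C_mul, Polynomial.coeff_X_pow]
    by_cases hk : k = j
    · subst hk; simp
    · simp [hk, Ne.symm hk]
  rw [Finset.sum_congr rfl hterm, Finset.sum_ite_eq' (range (d+1)) j]
  split_ifs with hj
  · rfl
  · have : d.choose j = 0 := Nat.choose_eq_zero_of_lt (by simp at hj; omega)
    simp [this]


lemma vanish {K : Type*} [Field K] (S : Finset ℕ) : ∀ (e t : ℕ → K),
    (∀ j < S.card, ∑ i ∈ S, e i * t i ^ j = 0) →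
    ∀ j, ∑ i ∈ S, e i * t i ^ j = 0 := by
  induction S using Finset.strongInduction with
  | _ S ih =>
    intro e t h j
    rcases S.eq_empty_or_nonempty with rfl | ⟨i₀, hi₀⟩
    · simp
    · have hcard : 0 < S.card := Finset.card_pos.mpr ⟨i₀, hi₀⟩
      set τ := t i₀ with hτ
      have key : ∀ j, ∑ i ∈ S.erase i₀, (e i * (t i - τ)) * t i ^ j = 0 := by
        apply ih (S.erase i₀) (Finset.erase_ssubset hi₀)
        intro j hj
        have hjc : j + 1 < S.card := by
          rw [Finset.card_erase_of_mem hi₀] at hj; omega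
        have hfull : ∑ i ∈ S, (e i * (t i - τ)) * t i ^ j = 0 := by
          have : ∀ i ∈ S, (e i * (t i - τ)) * t i ^ j
              = e i * t i ^ (j+1) - τ * (e i * t i ^ j) := by
            intro i _; ring
          rw [Finset.sum_congr rfl this, Finset.sum_sub_distrib, ← Finset.mul_sum,
            h (j+1) hjc, h j (by omega)]
          ring
        rw [← hfull]
        rw [← Finset.add_sum_erase S _ hi₀]
        simp [hτ]
      have hrec : ∀ j, ∑ i ∈ S, e i * t i ^ (j+1) = τ * ∑ i ∈ S, e i * t i ^ j := by
        intro j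
        have h2 : ∑ i ∈ S, (e i * (t i - τ)) * t i ^ j = 0 := by
          rw [← Finset.add_sum_erase S (fun i => e i * (t i - τ) * t i ^ j) hi₀, key j]
          simp [hτ]
        have h3 : ∀ i ∈ S, (e i * (t i - τ)) * t i ^ j
            = e i * t i ^ (j+1) - τ * (e i * t i ^ j) := by intro i _; ring
        rw [Finset.sum_congr rfl h3, Finset.sum_sub_distrib, ← Finset.mul_sum] at h2
        linear_combination h2
      induction j with
      | zero => exact h 0 hcard
      | succ k ihk => rw [hrec k, ihk]; ring



/-- If `x₁^(d-1) x₂ = λ₁ x₁^d + ∑_{i=3}^m λᵢ (aᵢᵀ x)^d` in `K[x₁,…,xₙ]` with `d ≥ 2`,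
then `m - 2 ≥ d`: at least `d` powers of linear forms are needed besides `x₁^d`. -/
theorem stmt4 (K : Type*) [Field K] [CharZero K] (n m d : ℕ) (hn : 2 ≤ n) (hd : 2 ≤ d)
    (a : ℕ → Fin n → K) (l : ℕ → K)
    (h : (X ⟨0, by omega⟩ : MvPolynomial (Fin n) K) ^ (d - 1) * X ⟨1, by omega⟩ =
      C (l 1) * (X ⟨0, by omega⟩ : MvPolynomial (Fin n) K) ^ d +
      ∑ i ∈ Icc 3 m, C (l i) * (∑ j, C (a i j) * X j) ^ d) :
    d ≤ m - 2 := by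
  by_contra hcon
  push_neg at hcon
  set i0 : Fin n := ⟨0, by omega⟩
  set i1 : Fin n := ⟨1, by omega⟩
  set α : ℕ → K := fun i => a i i0
  set β : ℕ → K := fun i => a i i1
  -- substitution into one-variable polynomials
  set f : Fin n → Polynomial K := fun j => if (j : ℕ) = 0 then Polynomial.X else if (j : ℕ) = 1 then 1 else 0 with hf
  have hf0 : f i0 = Polynomial.X := by simp [hf, i0]
  have hf1 : f i1 = 1 := by simp [hf, i1]
  have hsum : ∀ i, (aeval f) (∑ j, C (a i j) * X j)
      = Polynomial.C (α i) * Polynomial.X + Polynomial.C (β i) := by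
    intro i
    rw [map_sum]
    have hterm : ∀ j : Fin n, (aeval f) (C (a i j) * X j)
        = (if j = i0 then Polynomial.C (α i) * Polynomial.X else 0)
          + (if j = i1 then Polynomial.C (β i) else 0) := by
      intro j
      rw [map_mul, aeval_C, aeval_X]
      by_cases h0 : (j : ℕ) = 0
      · have : j = i0 := Fin.ext h0
        subst this
        simp [hf0, i0, i1, Polynomial.algebraMap_eq, α]
      · by_cases h1 : (j : ℕ) = 1
        · have : j = i1 := Fin.ext h1
          subst this
          simp [hf1, i0, i1, Polynomial.algebraMap_eq, β]
        · have hj0 : j ≠ i0 := fun hh => h0 (by rw [hh])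
          have hj1 : j ≠ i1 := fun hh => h1 (by rw [hh])
          simp [hf, h0, h1, hj0, hj1]
    rw [Finset.sum_congr rfl (fun j _ => hterm j), Finset.sum_add_distrib,
      Finset.sum_ite_eq' univ i0, Finset.sum_ite_eq' univ i1]
    simp
  have h2 := congrArg (aeval f) h
  rw [map_mul, map_pow, map_add, map_mul, map_pow, map_sum, aeval_X, aeval_X, aeval_C,
    hf0, hf1] at h2
  simp only [map_mul, map_pow, aeval_C, hsum] at h2
  have key : ∀ j, j < d → (if j = d-1 then (1:K) else 0)
      = (∑ i ∈ Icc 3 m, l i * (α i ^ j * β i ^ (d-j))) * (d.choose j : K) := by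
    intro j hj
    have h3 := congrArg (fun p => Polynomial.coeff p j) h2
    simp only [mul_one, Polynomial.coeff_X_pow, Polynomial.coeff_add,
      Polynomial.algebraMap_eq, Polynomial.coeff_C_mul, Polynomial.finset_sum_coeff,
      coeff_lin_pow, Polynomial.coeff_X_pow] at h3
    rw [if_neg (by omega : j ≠ d), mul_zero, zero_add] at h3
    rw [Finset.sum_mul]
    exact h3.trans (Finset.sum_congr rfl fun i _ => by ring)
  have key' : ∀ j, j < d - 1 → ∑ i ∈ Icc 3 m, l i * (α i ^ j * β i ^ (d-j)) = 0 := by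
    intro j hj
    have hk := key j (by omega)
    rw [if_neg (by omega : ¬ j = d - 1)] at hk
    have hch : ((d.choose j : ℕ) : K) ≠ 0 :=
      Nat.cast_ne_zero.mpr (Nat.choose_pos (by omega)).ne'
    rcases mul_eq_zero.mp hk.symm with h' | h'
    · exact h'
    · exact absurd h' hch
  set e : ℕ → K := fun i => l i * β i ^ d with he
  set tt : ℕ → K := fun i => α i / β i with htt
  have hmom : ∀ j, j ≤ d - 1 → ∑ i ∈ Icc 3 m, e i * tt i ^ j
      = ∑ i ∈ Icc 3 m, l i * (α i ^ j * β i ^ (d-j)) := by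
    intro j hj
    refine Finset.sum_congr rfl fun i _ => ?_
    by_cases hb : β i = 0
    · simp [he, htt, hb, zero_pow (by omega : d ≠ 0), zero_pow (by omega : d - j ≠ 0)]
    · have hbd : β i ^ d = β i ^ (d-j) * β i ^ j := by
        rw [← pow_add]; congr 1; omega
      simp only [he, htt, div_pow, hbd]
      field_simp
  have hall := vanish (Icc 3 m) e tt (fun j hj => by
    rw [hmom j (by rw [Nat.card_Icc] at hj; omega)]
    exact key' j (by rw [Nat.card_Icc] at hj; omega))
  have hfin := key (d-1) (by omega)
  rw [if_pos rfl, ← hmom (d-1) le_rfl, hall (d-1), zero_mul] at hfin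
  exact one_ne_zero hfin
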